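/- For an integer t, with a, b, c defined by the parametrization a = -(4t-7)(t+2)(t²-6t+4), b = (5t-6)(5t²-10t-4), c = (3t²-4t+4)(t²-4t+6), the quantity q(a,b,c) = abc(a²-b²)(b²-c²)(c²-a²) vanishes if and only if t ∈ {-2,-1,0,1,2,4,10}. -/

import Mathlib

set_option maxHeartbeats 1000000

theorem stmt_2 (t : ℤ)
    (a : ℤ) (ha : a = -(4 * t - 7) * (t + 2) * (t ^ 2 - 6 * t + 4))
    (b : ℤ) (hb : b = (5 * t - 6) * (5 * t ^ 2 - 10 * t - 4))
    (c : ℤ) (hc : c = (3 * t ^ 2 - 4 * t + 4) * (t ^ 2 - 4 * t + 6)) :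
    a * b * c * (a ^ 2 - b ^ 2) * (b ^ 2 - c ^ 2) * (c ^ 2 - a ^ 2) = 0 ↔
      t ∈ ({-2, -1, 0, 1, 2, 4, 10} : Set ℤ) := by
  subst ha hb hc
  simp only [Set.mem_insert_iff, Set.mem_singleton_iff]
  constructor
  · intro h
    simp only [mul_eq_zero] at h
    rcases h with (((((((h | h) | h) | (h | h)) | (h | h)) | h) | h) | h)
    · omega
    · omega
    · -- t^2-6t+4 = 0
      have h1 : t ≤ 5 := by nlinarith [sq_nonneg (t-3)]
      have h2 : 1 ≤ t := by nlinarith [sq_nonneg (t-3)]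
      interval_cases t <;> norm_num at h
    · omega
    · -- 5t^2-10t-4 = 0
      have h1 : t ≤ 3 := by nlinarith [sq_nonneg (t-3)]
      have h2 : -1 ≤ t := by nlinarith [sq_nonneg (t+1)]
      interval_cases t <;> norm_num at h
    · exfalso; nlinarith [sq_nonneg (3*t-2)]
    · exfalso; nlinarith [sq_nonneg (t-2)]
    · -- a^2 - b^2 = 0
      have h' : ((-(4*t-7)*(t+2)*(t^2-6*t+4)) - ((5*t-6)*(5*t^2-10*t-4))) *
          ((-(4*t-7)*(t+2)*(t^2-6*t+4)) + ((5*t-6)*(5*t^2-10*t-4))) = 0 := by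
        linear_combination h
      rcases mul_eq_zero.mp h' with h | h
      · -- a - b = 0 : -4t^4-2t^3+84t^2-128t+32 = 0
        have h1 : t ≤ 7 := by nlinarith [sq_nonneg t, sq_nonneg (t^2-5*t), sq_nonneg (t^2-7*t)]
        have h2 : -7 ≤ t := by nlinarith [sq_nonneg t, sq_nonneg (t^2+5*t), sq_nonneg (t^2+7*t)]
        interval_cases t <;> revert h <;> norm_num
      · -- a + b = 0 : -4t^4+48t^3-76t^2-48t+80 = 0
        have h1 : t ≤ 13 := by nlinarith [sq_nonneg t, sq_nonneg (t^2-10*t), sq_nonneg (t^2-13*t)]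
        have h2 : -13 ≤ t := by nlinarith [sq_nonneg t, sq_nonneg (t^2+10*t), sq_nonneg (t^2+13*t)]
        interval_cases t <;> revert h <;> norm_num
    · -- b^2 - c^2 = 0
      have h' : (((5*t-6)*(5*t^2-10*t-4)) - ((3*t^2-4*t+4)*(t^2-4*t+6))) *
          (((5*t-6)*(5*t^2-10*t-4)) + ((3*t^2-4*t+4)*(t^2-4*t+6))) = 0 := by
        linear_combination h
      rcases mul_eq_zero.mp h' with h | h
      · -- b - c = 0 : -3t^4+41t^3-118t^2+80t = 0
        have h1 : t ≤ 17 := by nlinarith [sq_nonneg t, sq_nonneg (t^2-14*t), sq_nonneg (t^2-17*t)]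
        have h2 : -17 ≤ t := by nlinarith [sq_nonneg t, sq_nonneg (t^2+14*t), sq_nonneg (t^2+17*t)]
        interval_cases t <;> revert h <;> norm_num
      · -- b + c = 0 : 3t^4+9t^3-42t^2+48 = 0
        have h1 : t ≤ 6 := by nlinarith [sq_nonneg t, sq_nonneg (t^2-4*t), sq_nonneg (t^2-6*t)]
        have h2 : -6 ≤ t := by nlinarith [sq_nonneg t, sq_nonneg (t^2+4*t), sq_nonneg (t^2+6*t)]
        interval_cases t <;> revert h <;> norm_num
    · -- c^2 - a^2 = 0
      have h' : (((3*t^2-4*t+4)*(t^2-4*t+6)) - (-(4*t-7)*(t+2)*(t^2-6*t+4))) *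
          (((3*t^2-4*t+4)*(t^2-4*t+6)) + (-(4*t-7)*(t+2)*(t^2-6*t+4))) = 0 := by
        linear_combination h
      rcases mul_eq_zero.mp h' with h | h
      · -- c - a = 0 : 7t^4-39t^3+34t^2+48t-32 = 0
        have h1 : t ≤ 7 := by nlinarith [sq_nonneg t, sq_nonneg (t^2-5*t), sq_nonneg (t^2-7*t)]
        have h2 : -7 ≤ t := by nlinarith [sq_nonneg t, sq_nonneg (t^2+5*t), sq_nonneg (t^2+7*t)]
        interval_cases t <;> revert h <;> norm_num
      · -- c + a = 0 : -t^4+7t^3+42t^2-128t+80 = 0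
        have h1 : t ≤ 12 := by nlinarith [sq_nonneg t, sq_nonneg (t^2-10*t), sq_nonneg (t^2-12*t)]
        have h2 : -12 ≤ t := by nlinarith [sq_nonneg t, sq_nonneg (t^2+10*t), sq_nonneg (t^2+12*t)]
        interval_cases t <;> revert h <;> norm_num
  · rintro (rfl | rfl | rfl | rfl | rfl | rfl | rfl) <;> norm_num
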